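/- Let f : [a,b] → ℝ be such that f' is absolutely continuous on [a,b] and f'' ∈ L^∞([a,b]). Then the perturbed trapezoid inequality holds: |(f(a)+f(b))/2 - ((b-a)/8)(f'(b)-f'(a)) - (1/(b-a))∫_a^b f(t) dt| ≤ ((b-a)²/24)·‖f''‖_∞. -/

import Mathlib

open MeasureTheory Set

theorem perturbed_trapezoid
    (a b : ℝ) (hab : a < b) (f f' f'' : ℝ → ℝ) (M : ℝ)
    (hf' : ∀ t ∈ Icc a b, HasDerivAt f (f' t) t)
    (hf'' : ∀ t ∈ Icc a b, HasDerivAt f' (f'' t) t)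
    (hint : IntervalIntegrable f'' volume a b)
    (hM : ∀ᵐ t ∂volume, t ∈ Icc a b → |f'' t| ≤ M) :
    |(f a + f b) / 2 - ((b - a) / 8) * (f' b - f' a)
      - (1 / (b - a)) * ∫ t in a..b, f t|
    ≤ ((b - a)^2 / 24) * M := by
  have hab' : a ≤ b := hab.le
  have hIcc : uIcc a b = Icc a b := uIcc_of_le hab'
  set m : ℝ := (a + b) / 2 with hm
  -- basic integrability
  have hcf' : ContinuousOn f' (uIcc a b) := by
    rw [hIcc]; exact fun t ht => (hf'' t ht).continuousAt.continuousWithinAt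
  have hcf : ContinuousOn f (uIcc a b) := by
    rw [hIcc]; exact fun t ht => (hf' t ht).continuousAt.continuousWithinAt
  have hif' : IntervalIntegrable f' volume a b := hcf'.intervalIntegrable
  have hif : IntervalIntegrable f volume a b := hcf.intervalIntegrable
  -- derivative facts for the kernel
  have hu : ∀ x : ℝ, HasDerivAt (fun t => (t - m)^2 / 2) (x - m) x := by
    intro x
    have h1 : HasDerivAt (fun t : ℝ => (t - m)^2 / 2)
        ((2 * (x - m)^1 * 1) / 2) x :=
      (((hasDerivAt_id x).sub_const m).pow 2).div_const 2
    simpa using h1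
  have hu' : ∀ x : ℝ, HasDerivAt (fun t => t - m) 1 x := fun x =>
    (hasDerivAt_id x).sub_const m
  -- first integration by parts
  have parts1 : ∫ t in a..b, ((t - m)^2 / 2) * f'' t
      = ((b - m)^2 / 2) * f' b - ((a - m)^2 / 2) * f' a
        - ∫ t in a..b, (t - m) * f' t := by
    exact intervalIntegral.integral_mul_deriv_eq_deriv_mul
      (fun x _ => hu x) (fun x hx => hf'' x (hIcc ▸ hx))
      ((continuous_id.sub continuous_const).continuousOn.intervalIntegrable) hint
  -- second integration by parts
  have parts2 : ∫ t in a..b, (t - m) * f' t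
      = (b - m) * f b - (a - m) * f a - ∫ t in a..b, f t := by
    have h := intervalIntegral.integral_mul_deriv_eq_deriv_mul
      (fun x _ => hu' x) (fun x hx => hf' x (hIcc ▸ hx))
      (continuousOn_const.intervalIntegrable) hif'
    simpa using h
  -- the key identity
  have key : (f a + f b) / 2 - ((b - a) / 8) * (f' b - f' a)
      - (1 / (b - a)) * ∫ t in a..b, f t
      = -(1 / (b - a)) * ∫ t in a..b, ((t - m)^2 / 2) * f'' t := by
    rw [parts1, parts2]
    have hba : b - a ≠ 0 := sub_ne_zero.2 hab.ne'
    field_simp [hm]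
    ring
  rw [key]
  -- bound the integral
  have hiu : IntervalIntegrable (fun t => ((t - m)^2 / 2) * f'' t) volume a b :=
    hint.continuousOn_mul (by fun_prop)
  have habs : IntervalIntegrable (fun t => |((t - m)^2 / 2) * f'' t|) volume a b :=
    hiu.abs
  have hiuM : IntervalIntegrable (fun t => ((t - m)^2 / 2) * M) volume a b :=
    (by fun_prop : Continuous fun t : ℝ => ((t - m)^2 / 2) * M).intervalIntegrable a b
  have hmono : ∫ t in a..b, |((t - m)^2 / 2) * f'' t|
      ≤ ∫ t in a..b, ((t - m)^2 / 2) * M := by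
    apply intervalIntegral.integral_mono_ae_restrict hab' habs hiuM
    have : ∀ᵐ t ∂(volume.restrict (Icc a b)), t ∈ Icc a b → |f'' t| ≤ M :=
      ae_restrict_of_ae hM
    filter_upwards [this, ae_restrict_mem measurableSet_Icc] with t h ht
    have h1 : |f'' t| ≤ M := h ht
    have h2 : (0:ℝ) ≤ (t - m)^2 / 2 := by positivity
    calc |((t - m)^2 / 2) * f'' t| = ((t - m)^2 / 2) * |f'' t| := by
          rw [abs_mul, abs_of_nonneg h2]
      _ ≤ ((t - m)^2 / 2) * M := by exact mul_le_mul_of_nonneg_left h1 h2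
  have hval : ∫ t in a..b, ((t - m)^2 / 2) * M = ((b - a)^3 / 24) * M := by
    have hD : ∀ x ∈ uIcc a b, HasDerivAt (fun t => (t - m)^3 / 6 * M)
        (((x - m)^2 / 2) * M) x := by
      intro x _
      have h1 : HasDerivAt (fun t : ℝ => (t - m)^3 / 6 * M)
          ((3 * (x - m)^2 * 1) / 6 * M) x :=
        ((((hasDerivAt_id x).sub_const m).pow 3).div_const 6).mul_const M
      convert h1 using 1; ring
    rw [intervalIntegral.integral_eq_sub_of_hasDerivAt hD hiuM]
    simp only [hm]; ring
  have hbound : |∫ t in a..b, ((t - m)^2 / 2) * f'' t| ≤ ((b - a)^3 / 24) * M := by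
    calc |∫ t in a..b, ((t - m)^2 / 2) * f'' t|
        ≤ ∫ t in a..b, |((t - m)^2 / 2) * f'' t| :=
          intervalIntegral.abs_integral_le_integral_abs hab'
      _ ≤ ∫ t in a..b, ((t - m)^2 / 2) * M := hmono
      _ = ((b - a)^3 / 24) * M := hval
  have hba : (0:ℝ) < b - a := sub_pos.2 hab
  rw [abs_mul, abs_neg, abs_of_nonneg (by positivity : (0:ℝ) ≤ 1 / (b - a))]
  calc (1 / (b - a)) * |∫ t in a..b, ((t - m)^2 / 2) * f'' t|
      ≤ (1 / (b - a)) * (((b - a)^3 / 24) * M) :=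
        mul_le_mul_of_nonneg_left hbound (by positivity)
    _ = ((b - a)^2 / 24) * M := by field_simp
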